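/- Let X, Y ∈ ℤ^{n×n} be symmetric, ζ, η ∈ ℤⁿ, and let Q be a rational orthogonal n×n matrix with Q X Qᵀ = Y and Q ζ = η, where det(W_{X,ζ}) ≠ 0. Let ℓ be the level of Q, i.e., the least positive integer such that ℓQ has integer entries. Then ℓ divides det(W_{X,ζ}). -/

import Mathlib

open Matrix

/-- The walk matrix `[ζ, Xζ, X²ζ, …, X^{n−1}ζ]`: its `j`-th column is `X^j ζ`. -/
def walkMatrix {n : ℕ} {R : Type*} [CommRing R]
    (X : Matrix (Fin n) (Fin n) R) (ζ : Fin n → R) : Matrix (Fin n) (Fin n) R :=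
  Matrix.of fun i j => ((X ^ (j : ℕ)) *ᵥ ζ) i

/-- `ℓ` is the level of the rational matrix `Q`: the least positive integer such that
`ℓ • Q` has integer entries. -/
def IsLevel {n : ℕ} (Q : Matrix (Fin n) (Fin n) ℚ) (ℓ : ℕ) : Prop :=
  (0 < ℓ ∧ ∀ i j, ∃ z : ℤ, (ℓ : ℚ) * Q i j = (z : ℚ)) ∧
    ∀ m : ℕ, 0 < m → (∀ i j, ∃ z : ℤ, (m : ℚ) * Q i j = (z : ℚ)) → ℓ ≤ m

/-- **Lemma.** The level `ℓ` of a rational orthogonal matrix `Q` with `Q X Qᵀ = Y`,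
`Q ζ = η`, divides `det(W_{X,ζ})` whenever the latter is nonzero. -/
theorem level_dvd_walk_det
    {n : ℕ} (X Y : Matrix (Fin n) (Fin n) ℤ) (ζ η : Fin n → ℤ)
    (hXsymm : X.IsSymm) (hYsymm : Y.IsSymm)
    (Q : Matrix (Fin n) (Fin n) ℚ)
    (hQ : Qᵀ * Q = 1)
    (hQX : Q * X.map (Int.cast : ℤ → ℚ) * Qᵀ = Y.map (Int.cast : ℤ → ℚ))
    (hQζ : Q *ᵥ (fun i => (ζ i : ℚ)) = fun i => (η i : ℚ))
    (hdet : (walkMatrix X ζ).det ≠ 0)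
    (ℓ : ℕ) (hℓ : IsLevel Q ℓ) :
    (ℓ : ℤ) ∣ (walkMatrix X ζ).det := by
  set c : ℤ → ℚ := Int.cast with hc
  have hcomm : Q * X.map c = Y.map c * Q := by
    have h := congrArg (· * Q) hQX
    simpa [Matrix.mul_assoc, hQ] using h
  have hpow : ∀ j : ℕ, Q * (X.map c) ^ j = (Y.map c) ^ j * Q := by
    intro j
    induction j with
    | zero => simp
    | succ j ih =>
      rw [pow_succ, pow_succ, ← Matrix.mul_assoc, ih, Matrix.mul_assoc, hcomm,
        ← Matrix.mul_assoc]
  have hmapW : ∀ (Z : Matrix (Fin n) (Fin n) ℤ) (v : Fin n → ℤ),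
      (walkMatrix Z v).map c = Matrix.of fun i (j : Fin n) =>
        (((Z.map c) ^ (j : ℕ)) *ᵥ fun k => ((v k : ℚ))) i := by
    intro Z v
    ext i j
    have hz : (Z.map c) ^ (j : ℕ) = (Z ^ (j : ℕ)).map c := by
      have := map_pow ((Int.castRingHom ℚ).mapMatrix) Z (j : ℕ)
      simpa [RingHom.mapMatrix_apply, hc] using this.symm
    simp only [walkMatrix, hz, Matrix.map_apply, Matrix.of_apply, Matrix.mulVec,
      dotProduct, hc]
    push_cast
    rw [← hc, hz]
    rfl
  have hQW : Q * (walkMatrix X ζ).map c = (walkMatrix Y η).map c := by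
    rw [hmapW, hmapW]
    ext i j
    have h2 : (Q *ᵥ (((X.map c) ^ (j : ℕ)) *ᵥ fun k => ((ζ k : ℚ)))) i
        = (((Y.map c) ^ (j : ℕ)) *ᵥ fun k => ((η k : ℚ))) i := by
      rw [Matrix.mulVec_mulVec, hpow, ← Matrix.mulVec_mulVec, hQζ]
    simpa [Matrix.mul_apply, Matrix.mulVec, dotProduct] using h2
  set W := walkMatrix X ζ with hWdef
  set V := walkMatrix Y η with hVdef
  have hdetmap : (W.map c).det = ((W.det : ℚ)) := by
    have := RingHom.map_det (Int.castRingHom ℚ) W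
    simpa [RingHom.mapMatrix_apply, hc] using this.symm
  have hadjmap : (W.map c).adjugate = W.adjugate.map c := by
    have := RingHom.map_adjugate (Int.castRingHom ℚ) W
    simpa [RingHom.mapMatrix_apply, hc] using this.symm
  have hscaled : (W.det : ℚ) • Q = (V * W.adjugate).map c := by
    calc (W.det : ℚ) • Q = Q * ((W.det : ℚ) • 1) := by
          rw [Matrix.mul_smul, Matrix.mul_one]
      _ = Q * ((W.map c) * (W.map c).adjugate) := by
          rw [Matrix.mul_adjugate, hdetmap]
      _ = (Q * W.map c) * (W.map c).adjugate := by rw [Matrix.mul_assoc]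
      _ = (V.map c) * (W.adjugate.map c) := by rw [hQW, hadjmap]
      _ = (V * W.adjugate).map c := by
          have := map_mul ((Int.castRingHom ℚ).mapMatrix) V W.adjugate
          simpa [RingHom.mapMatrix_apply, hc] using this.symm
  have hkey : ∀ i j, (W.det : ℚ) * Q i j = (((V * W.adjugate) i j : ℤ) : ℚ) := by
    intro i j
    have := congrFun (congrFun hscaled i) j
    simpa [Matrix.smul_apply, Matrix.map_apply, hc, smul_eq_mul] using this
  set d : ℕ := W.det.natAbs with hd
  have hdpos : 0 < d := Int.natAbs_pos.mpr hdet
  have hdint : ∀ i j, ∃ z : ℤ, (d : ℚ) * Q i j = (z : ℚ) := by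
    intro i j
    have habs : ((d : ℚ)) = |((W.det : ℚ))| := by
      rw [hd]
      push_cast [Nat.cast_natAbs]
      rfl
    rcases abs_cases ((W.det : ℚ)) with ⟨h, _⟩ | ⟨h, _⟩
    · exact ⟨(V * W.adjugate) i j, by rw [habs, h, hkey]⟩
    · refine ⟨-((V * W.adjugate) i j), ?_⟩
      rw [habs, h, neg_mul, hkey]
      push_cast
      ring
  set g : ℕ := Nat.gcd ℓ d with hg
  have hgpos : 0 < g := Nat.gcd_pos_of_pos_left _ hℓ.1.1
  have hgint : ∀ i j, ∃ z : ℤ, (g : ℚ) * Q i j = (z : ℚ) := by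
    intro i j
    obtain ⟨z1, h1⟩ := hℓ.1.2 i j
    obtain ⟨z2, h2⟩ := hdint i j
    refine ⟨Int.gcdA ℓ d * z1 + Int.gcdB ℓ d * z2, ?_⟩
    have hb : ((g : ℤ)) = (ℓ : ℤ) * Int.gcdA ℓ d + (d : ℤ) * Int.gcdB ℓ d := by
      have := Int.gcd_eq_gcd_ab (ℓ : ℤ) (d : ℤ)
      simpa [Int.gcd_natCast_natCast, hg] using this
    have hbq : ((g : ℚ)) = (ℓ : ℚ) * (Int.gcdA ℓ d : ℚ) + (d : ℚ) * (Int.gcdB ℓ d : ℚ) := by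
      exact_mod_cast congrArg (fun z : ℤ => (z : ℚ)) hb
    rw [hbq]
    push_cast
    calc ((ℓ : ℚ) * (Int.gcdA ℓ d : ℚ) + (d : ℚ) * (Int.gcdB ℓ d : ℚ)) * Q i j
        = (Int.gcdA ℓ d : ℚ) * ((ℓ : ℚ) * Q i j) + (Int.gcdB ℓ d : ℚ) * ((d : ℚ) * Q i j) := by
          ring
      _ = (Int.gcdA ℓ d : ℚ) * z1 + (Int.gcdB ℓ d : ℚ) * z2 := by rw [h1, h2]
  have hle : ℓ ≤ g := hℓ.2 g hgpos hgint
  have hge : g ≤ ℓ := Nat.le_of_dvd hℓ.1.1 (Nat.gcd_dvd_left ℓ d)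
  have hgeq : g = ℓ := le_antisymm hge hle
  have hℓd : ℓ ∣ d := hgeq ▸ Nat.gcd_dvd_right ℓ d
  have h1 : (ℓ : ℤ) ∣ (d : ℤ) := Int.natCast_dvd_natCast.mpr hℓd
  exact h1.trans (Int.natAbs_dvd.mpr dvd_rfl)
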